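/- Let n ≥ 3 be an integer, ε ∈ [0,1), and R > 0. Let V : (0,R] → ℝ be differentiable with V(r) ≥ 0 for all r ∈ (0,R], V(R) = 0, and suppose that for every r ∈ (0,R] one has (n−2)(1−V(r)) − r·V'(r) ≥ n(1−ε)² r², and that r^{n−2}(1−V(r)) → 0 as r → 0⁺. Then R ≤ 1/(1−ε). -/
import Mathlib


/-- Bound on the radius of the minimal neck: in radial coordinates
`g = dr²/V(r) + r² g_round`, near-extremal scalar curvature, a smooth pole at `r = 0`,
and the minimal neck condition `V(R) = 0` force `R ≤ 1/(1-ε)`. -/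
theorem neck_radius_bound (n : ℕ) (hn : 3 ≤ n) (ε : ℝ) (hε : ε ∈ Set.Ico (0 : ℝ) 1)
    (R : ℝ) (hR : 0 < R) (V V' : ℝ → ℝ)
    (hderiv : ∀ r ∈ Set.Ioc (0 : ℝ) R, HasDerivWithinAt V (V' r) (Set.Ioc (0 : ℝ) R) r)
    (hVnonneg : ∀ r ∈ Set.Ioc (0 : ℝ) R, 0 ≤ V r)
    (hVR : V R = 0)
    (hscal : ∀ r ∈ Set.Ioc (0 : ℝ) R,
      (n : ℝ) * (1 - ε) ^ 2 * r ^ 2 ≤ ((n : ℝ) - 2) * (1 - V r) - r * V' r)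
    (hpole : Filter.Tendsto (fun r : ℝ => r ^ (n - 2) * (1 - V r))
      (nhdsWithin 0 (Set.Ioi 0)) (nhds 0)) :
    R ≤ 1 / (1 - ε) := by
  have hε1 : ε < 1 := hε.2
  have h1ε : (0:ℝ) < 1 - ε := by linarith
  set c : ℝ := (1 - ε) ^ 2 with hc
  have hcpos : 0 < c := pow_pos h1ε 2
  set G : ℝ → ℝ := fun r => r ^ (n - 2) * (1 - V r) - c * r ^ n with hGdef
  have hcast : ((n - 2 : ℕ) : ℝ) = (n : ℝ) - 2 := by
    have : 2 ≤ n := by omega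
    push_cast [Nat.cast_sub this]; ring
  -- derivative of G at interior points
  have hGd : ∀ r ∈ Set.Ioo (0:ℝ) R,
      HasDerivAt G (((n:ℝ) - 2) * r ^ (n - 3) * (1 - V r) + r ^ (n - 2) * (0 - V' r)
        - c * ((n:ℝ) * r ^ (n - 1))) r := by
    intro r hr
    have hrIoc : r ∈ Set.Ioc (0:ℝ) R := ⟨hr.1, hr.2.le⟩
    have hmem : Set.Ioc (0:ℝ) R ∈ nhds r :=
      Filter.mem_of_superset (isOpen_Ioo.mem_nhds hr) Set.Ioo_subset_Ioc_self
    have hV : HasDerivAt V (V' r) r := (hderiv r hrIoc).hasDerivAt hmem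
    have h1 : HasDerivAt (fun x : ℝ => x ^ (n - 2)) (((n:ℝ) - 2) * r ^ (n - 3)) r := by
      have := hasDerivAt_pow (n - 2) r
      have he : n - 2 - 1 = n - 3 := by omega
      rw [he, hcast] at this
      exact this
    have h2 : HasDerivAt (fun x : ℝ => 1 - V x) (0 - V' r) r :=
      (hasDerivAt_const r (1:ℝ)).sub hV
    have h3 := h1.mul h2
    have h4 : HasDerivAt (fun x : ℝ => c * x ^ n) (c * ((n:ℝ) * r ^ (n - 1))) r :=
      (hasDerivAt_pow n r).const_mul c
    exact h3.sub h4
  -- the derivative is nonnegative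
  have hdnonneg : ∀ r ∈ Set.Ioo (0:ℝ) R,
      0 ≤ ((n:ℝ) - 2) * r ^ (n - 3) * (1 - V r) + r ^ (n - 2) * (0 - V' r)
        - c * ((n:ℝ) * r ^ (n - 1)) := by
    intro r hr
    have hrIoc : r ∈ Set.Ioc (0:ℝ) R := ⟨hr.1, hr.2.le⟩
    have key := hscal r hrIoc
    have hp3 : (0:ℝ) ≤ r ^ (n - 3) := pow_nonneg hr.1.le _
    have hmul := mul_le_mul_of_nonneg_left key hp3
    have e1 : r ^ (n - 3) * r = r ^ (n - 2) := by
      rw [← pow_succ]; congr 1; omega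
    have e2 : r ^ (n - 3) * r ^ 2 = r ^ (n - 1) := by
      rw [← pow_add]; congr 1; omega
    have expand : r ^ (n - 3) * (((n:ℝ) - 2) * (1 - V r) - r * V' r)
        = ((n:ℝ) - 2) * r ^ (n - 3) * (1 - V r) + r ^ (n - 2) * (0 - V' r) := by
      rw [← e1]; ring
    have expand2 : r ^ (n - 3) * ((n:ℝ) * c * r ^ 2) = c * ((n:ℝ) * r ^ (n - 1)) := by
      rw [← e2]; ring
    rw [expand, expand2] at hmul
    linarith
  -- G is monotone on Ioc 0 R
  have hVcont : ContinuousOn V (Set.Ioc 0 R) := fun r hr => (hderiv r hr).continuousWithinAt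
  have hGcont : ContinuousOn G (Set.Ioc 0 R) := by
    apply ContinuousOn.sub
    · exact (continuousOn_pow _).mul (continuousOn_const.sub hVcont)
    · exact continuousOn_const.mul (continuousOn_pow _)
  have hint : interior (Set.Ioc (0:ℝ) R) = Set.Ioo 0 R := interior_Ioc
  have hmono : MonotoneOn G (Set.Ioc 0 R) := by
    apply monotoneOn_of_deriv_nonneg (convex_Ioc 0 R) hGcont
    · rw [hint]
      exact fun r hr => (hGd r hr).differentiableAt.differentiableWithinAt
    · rw [hint]
      intro r hr
      rw [(hGd r hr).deriv]
      exact hdnonneg r hr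
  -- G tends to 0 at 0⁺
  have hlim : Filter.Tendsto G (nhdsWithin 0 (Set.Ioi 0)) (nhds 0) := by
    have h2 : Filter.Tendsto (fun r : ℝ => c * r ^ n) (nhdsWithin 0 (Set.Ioi 0)) (nhds 0) := by
      have : Filter.Tendsto (fun r : ℝ => c * r ^ n) (nhds 0) (nhds (c * 0 ^ n)) :=
        (continuous_const.mul (continuous_pow n)).tendsto 0
      rw [zero_pow (by omega : n ≠ 0), mul_zero] at this
      exact this.mono_left nhdsWithin_le_nhds
    have := hpole.sub h2
    simpa using this
  -- hence 0 ≤ G R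
  have hGR : 0 ≤ G R := by
    apply le_of_tendsto hlim
    filter_upwards [Ioo_mem_nhdsGT_of_mem (Set.mem_Ico.mpr ⟨le_refl 0, hR⟩)] with r hr
    exact hmono ⟨hr.1, hr.2.le⟩ (Set.mem_Ioc.mpr ⟨hR, le_refl R⟩) hr.2.le
  -- unpack G R
  have hGR' : c * R ^ n ≤ R ^ (n - 2) := by
    have : G R = R ^ (n - 2) * 1 - c * R ^ n := by rw [hGdef]; simp [hVR]
    rw [this] at hGR; linarith
  have eR : R ^ n = R ^ (n - 2) * R ^ 2 := by
    rw [← pow_add]; congr 1; omega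
  have hp2 : (0:ℝ) < R ^ (n - 2) := pow_pos hR _
  have hcR2 : c * R ^ 2 ≤ 1 := by
    rw [eR] at hGR'
    nlinarith
  have hfin : (1 - ε) * R ≤ 1 := by
    nlinarith [mul_pos h1ε hR]
  rw [le_div_iff₀ h1ε]
  linarith
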